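/- Augmented hypergraph construction: Let q be a prime power and let c be a positive integer with c < q − 1 and c dividing q − 1. Then there exists a q-uniform hypergraph with exactly (q² − 1)/c + 1 vertices and at least (q² − 1)/c + 2 distinct edges such that every two distinct edges intersect in at most c vertices. Concretely: there is a finite type V' with |V'| = (q² − 1)/c + 1 and a Finset E' of Finsets of V' with |E'| ≥ (q² − 1)/c + 2, such that every e ∈ E' has |e| = q and |e ∩ e'| ≤ c for all distinct e, e' ∈ E'. -/

import Mathlib

open Finset Polynomial

set_option linter.unusedSectionVars false
set_option maxHeartbeats 1000000

namespace AugHyp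

noncomputable section
attribute [local instance] Classical.propDecidable

variable {K : Type} [Field K] [Fintype K]

/-- The trace-like map `x ↦ x + x^q`. -/
def tr (q : ℕ) (x : K) : K := x + x ^ q

variable {q : ℕ}

lemma tr_add (hfrob : ∀ x y : K, (x + y) ^ q = x ^ q + y ^ q) (x y : K) :
    tr q (x + y) = tr q x + tr q y := by
  simp only [tr, hfrob]; ring

lemma tr_smul {l : K} (hl : l ^ q = l) (x : K) : tr q (l * x) = l * tr q x := by
  simp only [tr, mul_pow, hl]; ring

lemma tr_pow_q (hcard : Fintype.card K = q ^ 2)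
    (x : K) (hfrob : ∀ x y : K, (x + y) ^ q = x ^ q + y ^ q) :
    (tr q x) ^ q = tr q x := by
  have hx : (x ^ q) ^ q = x := by
    rw [← pow_mul, ← pow_two, ← hcard, FiniteField.pow_card]
  simp only [tr, hfrob, hx]
  ring

lemma exists_tr_ne_zero (hq : 3 ≤ q) (hcard : Fintype.card K = q ^ 2) :
    ∃ x : K, tr q x ≠ 0 := by
  by_contra h
  push_neg at h
  set P : K[X] := X ^ q + X with hP
  have hdeg : P.natDegree = q := by
    rw [hP, natDegree_add_eq_left_of_natDegree_lt] <;>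
      simp [natDegree_X_pow, natDegree_X] <;> omega
  have hP0 : P ≠ 0 := Polynomial.ne_zero_of_natDegree_gt (n := 0) (by omega)
  have hsub : (univ : Finset K) ⊆ P.roots.toFinset := by
    intro x _
    rw [Multiset.mem_toFinset, mem_roots hP0]
    have := h x
    simp only [tr] at this
    simp only [IsRoot, hP, eval_add, eval_pow, eval_X]
    linear_combination this
  have h1 : (univ : Finset K).card ≤ P.roots.toFinset.card := card_le_card hsub
  have h2 : P.roots.toFinset.card ≤ Multiset.card P.roots := Multiset.toFinset_card_le _
  have h3 : Multiset.card P.roots ≤ q := hdeg ▸ P.card_roots'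
  rw [card_univ, hcard] at h1
  nlinarith

lemma card_pow_eq_one {m : ℕ} (hm : 0 < m) (hdvd : m ∣ Fintype.card Kˣ) :
    (univ.filter fun x : K => x ^ m = 1).card = m := by
  obtain ⟨g, hg⟩ := IsCyclic.exists_ofOrder_eq_natCard (α := Kˣ)
  rw [Nat.card_eq_fintype_card] at hg
  set N := Fintype.card Kˣ with hN
  have hN0 : N ≠ 0 := Fintype.card_ne_zero
  have hdiv : N / m ∣ N := Nat.div_dvd_of_dvd hdvd
  have hord : orderOf (g ^ (N / m)) = m := by
    rw [orderOf_pow, hg, Nat.gcd_eq_right hdiv, Nat.div_div_self hdvd hN0]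
  have hprim : IsPrimitiveRoot ((g ^ (N / m) : Kˣ) : K) m := by
    have h2 : IsPrimitiveRoot (g ^ (N / m)) (orderOf (g ^ (N / m))) :=
      IsPrimitiveRoot.orderOf _
    rw [hord] at h2
    exact (IsPrimitiveRoot.coe_units_iff (M := K)).mpr h2
  have heq : (univ.filter fun x : K => x ^ m = 1) = nthRootsFinset m (1 : K) := by
    ext x
    simp [Polynomial.mem_nthRootsFinset hm]
  rw [heq, hprim.card_nthRootsFinset]

lemma card_units_pow_eq_one {m : ℕ} (hm : 0 < m) (hdvd : m ∣ Fintype.card Kˣ) :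
    (univ.filter fun u : Kˣ => u ^ m = 1).card = m := by
  have hbij : (univ.filter fun u : Kˣ => u ^ m = 1).card
      = (univ.filter fun x : K => x ^ m = 1).card := by
    apply Finset.card_bij (fun (u : Kˣ) _ => (u : K))
    · intro u hu
      simp only [mem_filter, mem_univ, true_and] at hu ⊢
      rw [← Units.val_pow_eq_pow_val, hu, Units.val_one]
    · intro u _ v _ h
      exact Units.ext h
    · intro x hx
      simp only [mem_filter, mem_univ, true_and] at hx
      have hx0 : x ≠ 0 := by
        intro h
        rw [h, zero_pow hm.ne'] at hx
        exact zero_ne_one hx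
      refine ⟨Units.mk0 x hx0, ?_, rfl⟩
      simp only [mem_filter, mem_univ, true_and]
      ext
      rw [Units.val_pow_eq_pow_val]
      simpa using hx
  rw [hbij]
  exact card_pow_eq_one hm hdvd

lemma sub_one_dvd_card_units (hq : 3 ≤ q) (hcard : Fintype.card K = q ^ 2) :
    (q - 1) ∣ Fintype.card Kˣ := by
  have hcu : Fintype.card Kˣ = q ^ 2 - 1 := by rw [Fintype.card_units, hcard]
  have hfact : (q - 1) * (q + 1) = q ^ 2 - 1 := by
    have h1 : 1 ≤ q := by omega
    have h2 : 1 ≤ q ^ 2 := Nat.one_le_pow _ _ (by omega)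
    zify [h1, h2]; ring
  rw [hcu, ← hfact]
  exact Dvd.intro _ rfl

lemma card_F (hq : 3 ≤ q) (hcard : Fintype.card K = q ^ 2) :
    (univ.filter fun x : K => x ^ q = x).card = q := by
  have hdvd : (q - 1) ∣ Fintype.card Kˣ := sub_one_dvd_card_units hq hcard
  have hqsub : q - 1 + 1 = q := by omega
  have hsplit : (univ.filter fun x : K => x ^ q = x)
      = insert (0 : K) (univ.filter fun x : K => x ^ (q - 1) = 1) := by
    ext x
    simp only [mem_filter, mem_univ, true_and, mem_insert]
    constructor
    · intro hx
      rcases eq_or_ne x 0 with h | h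
      · exact Or.inl h
      · right
        have hx' : x ^ (q - 1) * x = 1 * x := by
          rw [← pow_succ, hqsub, hx, one_mul]
        exact mul_right_cancel₀ h hx'
    · rintro (rfl | hx)
      · rw [zero_pow (by omega)]
      · calc x ^ q = x ^ (q - 1) * x := by rw [← pow_succ, hqsub]
          _ = x := by rw [hx, one_mul]
  have h0 : (0 : K) ∉ univ.filter fun x : K => x ^ (q - 1) = 1 := by
    simp only [mem_filter, mem_univ, true_and]
    rw [zero_pow (by omega)]
    exact zero_ne_one
  rw [hsplit, card_insert_of_notMem h0, card_pow_eq_one (by omega) hdvd]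
  omega

lemma card_fiber (hq : 3 ≤ q) (hcard : Fintype.card K = q ^ 2)
    (hfrob : ∀ x y : K, (x + y) ^ q = x ^ q + y ^ q)
    {u : K} (hu : u ≠ 0) {w : K} (hw : w ^ q = w) :
    (univ.filter fun x : K => tr q (u * x) = w).card = q := by
  have hpsi_add : ∀ x y : K, tr q (u * (x + y)) = tr q (u * x) + tr q (u * y) := by
    intro x y; rw [mul_add]; exact tr_add hfrob _ _
  set ψ : K →+ K := AddMonoidHom.mk' (fun x => tr q (u * x)) hpsi_add with hψ
  have hψapp : ∀ x : K, ψ x = tr q (u * x) := fun x => rfl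
  have hsurj : ∀ w' : K, w' ^ q = w' → ∃ x : K, ψ x = w' := by
    intro w' hw'
    obtain ⟨y, hy⟩ := exists_tr_ne_zero hq hcard
    have hv : ψ (u⁻¹ * y) = tr q y := by
      rw [hψapp, mul_inv_cancel_left₀ hu]
    set v := tr q y with hvdef
    have hvq : v ^ q = v := tr_pow_q hcard _ hfrob
    have hvne : v ≠ 0 := hy
    refine ⟨(w' * v⁻¹) * (u⁻¹ * y), ?_⟩
    have hl : (w' * v⁻¹) ^ q = w' * v⁻¹ := by
      rw [mul_pow, hw', inv_pow, hvq]
    rw [hψapp, show u * ((w' * v⁻¹) * (u⁻¹ * y)) = (w' * v⁻¹) * (u * (u⁻¹ * y)) by ring,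
      mul_inv_cancel_left₀ hu, tr_smul hl, ← hvdef]
    field_simp
  set Z := univ.filter fun x : K => ψ x = 0 with hZ
  have hfib : ∀ w' : K, w' ^ q = w' →
      (univ.filter fun x : K => ψ x = w').card = Z.card := by
    intro w' hw'
    obtain ⟨x₀, hx₀⟩ := hsurj w' hw'
    apply Finset.card_bij (fun x _ => x - x₀)
    · intro x hx
      simp only [mem_filter, mem_univ, true_and, hZ] at hx ⊢
      rw [map_sub, hx, hx₀, sub_self]
    · intro x _ y _ h
      exact sub_left_injective h
    · intro z hz
      simp only [mem_filter, mem_univ, true_and, hZ] at hz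
      refine ⟨z + x₀, ?_, by ring⟩
      simp only [mem_filter, mem_univ, true_and]
      rw [map_add, hz, hx₀, zero_add]
  set F := univ.filter fun w' : K => w' ^ q = w' with hF
  have hmap : ∀ x : K, x ∈ (univ : Finset K) → ψ x ∈ F := by
    intro x _
    simp only [hF, mem_filter, mem_univ, true_and, hψapp]
    exact tr_pow_q hcard _ hfrob
  have hsum := Finset.card_eq_sum_card_fiberwise hmap
  rw [card_univ, hcard] at hsum
  have hcongr : ∀ w' ∈ F, (univ.filter fun x : K => ψ x = w').card = Z.card := by
    intro w' hw'
    exact hfib w' (mem_filter.mp hw').2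
  rw [Finset.sum_congr rfl hcongr, Finset.sum_const, card_F hq hcard, smul_eq_mul] at hsum
  have hZq : Z.card = q := by
    have hq0 : 0 < q := by omega
    have : q * q = q * Z.card := by rw [← hsum]; ring
    exact (Nat.eq_of_mul_eq_mul_left hq0 this).symm
  have heq2 : (univ.filter fun x : K => tr q (u * x) = w)
      = (univ.filter fun x : K => ψ x = w) :=
    Finset.filter_congr (fun x _ => by rw [hψapp])
  rw [heq2, hfib w hw, hZq]

lemma exists_smul_eq (hq : 3 ≤ q) (hcard : Fintype.card K = q ^ 2)
    (hfrob : ∀ x y : K, (x + y) ^ q = x ^ q + y ^ q)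
    {u a b : K} (hu : u ≠ 0) (ha : a ≠ 0)
    (hau : tr q (a * u) = 0) (hbu : tr q (b * u) = 0) :
    ∃ l : K, l ^ q = l ∧ b = l * a := by
  set M := univ.filter fun x : K => tr q (u * x) = 0 with hM
  have hMq : M.card = q := card_fiber hq hcard hfrob hu (by rw [zero_pow (by omega)])
  set F := univ.filter fun w' : K => w' ^ q = w' with hF
  have hFa : (F.image fun l => l * a) ⊆ M := by
    intro x hx
    obtain ⟨l, hl, rfl⟩ := mem_image.mp hx
    have hlq : l ^ q = l := (mem_filter.mp hl).2
    simp only [hM, mem_filter, mem_univ, true_and]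
    rw [show u * (l * a) = l * (a * u) by ring, tr_smul hlq, hau, mul_zero]
  have hcardim : (F.image fun l => l * a).card = q := by
    rw [card_image_of_injective _ (mul_left_injective₀ ha), hF, card_F hq hcard]
  have heq : (F.image fun l => l * a) = M :=
    eq_of_subset_of_card_le hFa (by rw [hMq, hcardim])
  have hbM : b ∈ M := by
    simp only [hM, mem_filter, mem_univ, true_and]
    rw [mul_comm] at hbu
    exact hbu
  rw [← heq] at hbM
  obtain ⟨l, hl, hla⟩ := mem_image.mp hbM
  exact ⟨l, (mem_filter.mp hl).2, hla.symm⟩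

lemma card_mk_fiber {G : Type} [Group G] [Fintype G] (H : Subgroup G) (v : G ⧸ H) :
    (univ.filter fun x : G => (QuotientGroup.mk x : G ⧸ H) = v).card = Nat.card H := by
  classical
  obtain ⟨x0, rfl⟩ := QuotientGroup.mk_surjective v
  have himg : (univ.filter fun x : G => (QuotientGroup.mk x : G ⧸ H) = QuotientGroup.mk x0)
      = (univ.filter fun h : G => h ∈ H).image (fun h => x0 * h) := by
    ext x
    simp only [mem_filter, mem_univ, true_and, mem_image]
    constructor
    · intro hx
      refine ⟨x0⁻¹ * x, ?_, by group⟩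
      have h2 := QuotientGroup.eq.mp hx
      have h3 : (x0⁻¹ * x)⁻¹ = x⁻¹ * x0 := by group
      rw [← H.inv_mem_iff, h3]
      exact h2
    · rintro ⟨h, hh, rfl⟩
      apply QuotientGroup.eq.mpr
      have : (x0 * h)⁻¹ * x0 = h⁻¹ := by group
      rw [this]
      exact H.inv_mem hh
  rw [himg, card_image_of_injective _ (mul_right_injective x0)]
  rw [Nat.card_eq_fintype_card]
  rw [Fintype.card_subtype]

def Hgrp (K : Type) [Field K] (c : ℕ) : Subgroup Kˣ := (powMonoidHom c).ker

def Fgrp (K : Type) [Field K] (q : ℕ) : Subgroup Kˣ := (powMonoidHom (q - 1)).ker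

lemma mem_Hgrp {c : ℕ} {u : Kˣ} : u ∈ Hgrp K c ↔ u ^ c = 1 := by
  simp [Hgrp, MonoidHom.mem_ker, powMonoidHom_apply]

lemma mem_Fgrp {u : Kˣ} : u ∈ Fgrp K q ↔ u ^ (q - 1) = 1 := by
  simp [Fgrp, MonoidHom.mem_ker, powMonoidHom_apply]

lemma H_le_F {c : ℕ} (hdvd : c ∣ q - 1) {u : Kˣ} (hu : u ∈ Hgrp K c) :
    u ∈ Fgrp K q := by
  rw [mem_Hgrp] at hu
  rw [mem_Fgrp]
  obtain ⟨k, hk⟩ := hdvd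
  rw [hk, pow_mul, hu, one_pow]

lemma F_fix (hq : 3 ≤ q) {u : Kˣ} (hu : u ∈ Fgrp K q) : (u : K) ^ q = (u : K) := by
  rw [mem_Fgrp] at hu
  have h1 : (u : K) ^ (q - 1) = 1 := by
    rw [← Units.val_pow_eq_pow_val, hu, Units.val_one]
  calc (u : K) ^ q = (u : K) ^ (q - 1) * (u : K) := by
        rw [← pow_succ]
        congr 1
        omega
    _ = (u : K) := by rw [h1, one_mul]

def line (q : ℕ) (a : Kˣ) : Finset Kˣ :=
  univ.filter fun x : Kˣ => tr q ((a : K) * (x : K)) = 1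

lemma mem_line {a x : Kˣ} : x ∈ line q a ↔ tr q ((a : K) * (x : K)) = 1 := by
  simp [line]

lemma card_line (hq : 3 ≤ q) (hcard : Fintype.card K = q ^ 2)
    (hfrob : ∀ x y : K, (x + y) ^ q = x ^ q + y ^ q) (a : Kˣ) :
    (line q a).card = q := by
  have hbij : (line q a).card = (univ.filter fun x : K => tr q ((a : K) * x) = 1).card := by
    apply Finset.card_bij (fun (x : Kˣ) _ => (x : K))
    · intro x hx
      rw [mem_line] at hx
      simp only [mem_filter, mem_univ, true_and]
      exact hx
    · intro x _ y _ h
      exact Units.ext h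
    · intro x hx
      simp only [mem_filter, mem_univ, true_and] at hx
      have hx0 : x ≠ 0 := by
        rintro rfl
        rw [mul_zero] at hx
        simp only [tr, zero_pow (show q ≠ 0 by omega), add_zero] at hx
        exact zero_ne_one hx
      refine ⟨Units.mk0 x hx0, ?_, rfl⟩
      rw [mem_line]
      simpa using hx
  rw [hbij]
  exact card_fiber hq hcard hfrob (Units.ne_zero a) (one_pow q)

def edge (q c : ℕ) {K : Type} [Field K] [Fintype K] (a : Kˣ) :
    Finset (Option (Kˣ ⧸ Hgrp K c)) :=
  (line q a).image fun x => some (QuotientGroup.mk x : Kˣ ⧸ Hgrp K c)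

lemma mk_injOn_line (hq : 3 ≤ q) {c : ℕ} (hdvd : c ∣ q - 1) {a : Kˣ} :
    ∀ x ∈ line q a, ∀ y ∈ line q a,
      (QuotientGroup.mk x : Kˣ ⧸ Hgrp K c) = QuotientGroup.mk y → x = y := by
  intro x hx y hy hxy
  have hh : x⁻¹ * y ∈ Hgrp K c := QuotientGroup.eq.mp hxy
  set h := x⁻¹ * y with hhdef
  have hyx : y = x * h := by rw [hhdef]; group
  have hhF : (h : K) ^ q = (h : K) := F_fix hq (H_le_F hdvd hh)
  rw [mem_line] at hx hy
  have htr : tr q ((a : K) * (y : K)) = (h : K) * tr q ((a : K) * (x : K)) := by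
    rw [hyx, show ((a : K) * ((x * h : Kˣ) : K)) = (h : K) * ((a : K) * (x : K)) by
      push_cast; ring]
    exact tr_smul hhF _
  rw [hy, hx, mul_one] at htr
  have hh1 : h = 1 := Units.ext (by rw [Units.val_one, ← htr])
  rw [hyx, hh1, mul_one]

lemma card_edge (hq : 3 ≤ q) {c : ℕ} (hcard : Fintype.card K = q ^ 2)
    (hfrob : ∀ x y : K, (x + y) ^ q = x ^ q + y ^ q) (hdvd : c ∣ q - 1) (a : Kˣ) :
    (edge q c a).card = q := by
  rw [edge, card_image_of_injOn, card_line hq hcard hfrob]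
  intro x hx y hy hxy
  exact mk_injOn_line hq hdvd x hx y hy (Option.some_injective _ hxy)

lemma c_dvd_card_units (hq : 3 ≤ q) {c : ℕ} (hcard : Fintype.card K = q ^ 2)
    (hdvd : c ∣ q - 1) : c ∣ Fintype.card Kˣ :=
  hdvd.trans (sub_one_dvd_card_units hq hcard)

lemma edge_inter (hq : 3 ≤ q) {c : ℕ} (hcard : Fintype.card K = q ^ 2)
    (hfrob : ∀ x y : K, (x + y) ^ q = x ^ q + y ^ q)
    (hdvd : c ∣ q - 1) (hc : 0 < c) {a b : Kˣ}
    (hab : (QuotientGroup.mk a : Kˣ ⧸ Hgrp K c) ≠ QuotientGroup.mk b) :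
    ((edge q c a) ∩ (edge q c b)).card ≤ c := by
  set Hfin := univ.filter (fun h : Kˣ => h ∈ Hgrp K c) with hHfin
  have hHcard : Hfin.card = c := by
    have heq : Hfin = univ.filter (fun h : Kˣ => h ^ c = 1) :=
      Finset.filter_congr (fun x _ => by rw [mem_Hgrp])
    rw [heq]
    exact card_units_pow_eq_one hc (c_dvd_card_units hq hcard hdvd)
  set S := Hfin.biUnion (fun h => univ.filter (fun x : Kˣ =>
    tr q ((a : K) * (x : K)) = 1 ∧ tr q (((b * h : Kˣ) : K) * (x : K)) = 1)) with hS
  have hpiece : ∀ h ∈ Hfin, (univ.filter (fun x : Kˣ =>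
      tr q ((a : K) * (x : K)) = 1 ∧ tr q (((b * h : Kˣ) : K) * (x : K)) = 1)).card ≤ 1 := by
    intro h hhHfin
    rw [Finset.card_le_one]
    intro x hx y hy
    simp only [mem_filter, mem_univ, true_and] at hx hy
    by_contra hne
    set u := (x : K) - (y : K) with hu
    have hu0 : u ≠ 0 := by
      rw [hu, sub_ne_zero]
      exact fun he => hne (Units.ext he)
    have key : ∀ A : K, tr q (A * (x : K)) = 1 → tr q (A * (y : K)) = 1 →
        tr q (A * u) = 0 := by
      intro A h1 h2
      have hd : A * (x : K) = A * (y : K) + A * u := by rw [hu]; ring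
      rw [hd, tr_add hfrob, h2] at h1
      linear_combination h1
    have hau : tr q ((a : K) * u) = 0 := key _ hx.1 hy.1
    have hbu : tr q (((b * h : Kˣ) : K) * u) = 0 := key _ hx.2 hy.2
    obtain ⟨l, hlq, hbl⟩ := exists_smul_eq hq hcard hfrob hu0 (Units.ne_zero a) hau hbu
    have hl1 : l = 1 := by
      have h1 := hx.2
      rw [hbl, show l * (a : K) * (x : K) = l * ((a : K) * (x : K)) by ring,
        tr_smul hlq, hx.1, mul_one] at h1
      exact h1
    rw [hl1, one_mul] at hbl
    have hba : b * h = a := Units.ext hbl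
    apply hab
    apply QuotientGroup.eq.mpr
    have hhH : h ∈ Hgrp K c := (mem_filter.mp hhHfin).2
    have hab' : a⁻¹ * b = h⁻¹ := by
      rw [← hba]; group
    rw [hab']
    exact (Hgrp K c).inv_mem hhH
  have hsub : edge q c a ∩ edge q c b ⊆
      S.image (fun x => some (QuotientGroup.mk x : Kˣ ⧸ Hgrp K c)) := by
    intro v hv
    rw [mem_inter] at hv
    obtain ⟨x, hxline, hxv⟩ := mem_image.mp hv.1
    obtain ⟨y, hyline, hyv⟩ := mem_image.mp hv.2
    have hxy : (QuotientGroup.mk x : Kˣ ⧸ Hgrp K c) = QuotientGroup.mk y :=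
      Option.some_injective _ (hxv.trans hyv.symm)
    have hh : x⁻¹ * y ∈ Hgrp K c := QuotientGroup.eq.mp hxy
    rw [mem_image]
    refine ⟨x, ?_, hxv⟩
    rw [hS, mem_biUnion]
    refine ⟨x⁻¹ * y, mem_filter.mpr ⟨mem_univ _, hh⟩, ?_⟩
    rw [mem_filter]
    refine ⟨mem_univ _, mem_line.mp hxline, ?_⟩
    have hyy : y = x * (x⁻¹ * y) := by group
    have := mem_line.mp hyline
    have hx0 : (x : K) ≠ 0 := Units.ne_zero x
    rw [show ((b * (x⁻¹ * y) : Kˣ) : K) * (x : K) = ((b : K) * (y : K)) by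
      push_cast; field_simp, this]
  calc (edge q c a ∩ edge q c b).card
      ≤ (S.image (fun x => some (QuotientGroup.mk x : Kˣ ⧸ Hgrp K c))).card :=
        card_le_card hsub
    _ ≤ S.card := card_image_le
    _ ≤ ∑ h ∈ Hfin, (univ.filter (fun x : Kˣ =>
          tr q ((a : K) * (x : K)) = 1 ∧ tr q (((b * h : Kˣ) : K) * (x : K)) = 1)).card :=
        card_biUnion_le
    _ ≤ ∑ _h ∈ Hfin, 1 := Finset.sum_le_sum hpiece
    _ = Hfin.card := by rw [Finset.sum_const, smul_eq_mul, mul_one]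
    _ = c := hHcard

lemma edge_mul_subset {c : ℕ} {a h : Kˣ} (hh : h ∈ Hgrp K c) :
    edge q c (a * h) ⊆ edge q c a := by
  intro v hv
  obtain ⟨x, hx, hxv⟩ := mem_image.mp hv
  rw [mem_line] at hx
  rw [edge, mem_image]
  refine ⟨x * h, ?_, ?_⟩
  · rw [mem_line, show (a : K) * ((x * h : Kˣ) : K) = ((a * h : Kˣ) : K) * (x : K) by
      push_cast; ring]
    exact hx
  · rw [← hxv]
    congr 1
    apply QuotientGroup.eq.mpr
    have : (x * h)⁻¹ * x = h⁻¹ := by group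
    rw [this]
    exact (Hgrp K c).inv_mem hh

lemma edge_congr {c : ℕ} {a b : Kˣ}
    (hab : (QuotientGroup.mk a : Kˣ ⧸ Hgrp K c) = QuotientGroup.mk b) :
    edge q c a = edge q c b := by
  have hh : a⁻¹ * b ∈ Hgrp K c := QuotientGroup.eq.mp hab
  have hb : b = a * (a⁻¹ * b) := by group
  have ha : a = b * (a⁻¹ * b)⁻¹ := by group
  apply Finset.Subset.antisymm
  · nth_rewrite 1 [ha]
    exact edge_mul_subset ((Hgrp K c).inv_mem hh)
  · nth_rewrite 1 [hb]
    exact edge_mul_subset hh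

def pencil (q c : ℕ) {K : Type} [Field K] [Fintype K] (T : Finset (Kˣ ⧸ Fgrp K q)) :
    Finset (Option (Kˣ ⧸ Hgrp K c)) :=
  insert none ((univ.filter fun x : Kˣ => (QuotientGroup.mk x : Kˣ ⧸ Fgrp K q) ∈ T).image
    fun x => some (QuotientGroup.mk x : Kˣ ⧸ Hgrp K c))

lemma card_Hgrp (hq : 3 ≤ q) {c : ℕ} (hcard : Fintype.card K = q ^ 2)
    (hdvd : c ∣ q - 1) (hc : 0 < c) : Nat.card (Hgrp K c) = c := by
  rw [Nat.card_eq_fintype_card, Fintype.card_subtype]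
  have heq : (univ.filter fun u : Kˣ => u ∈ Hgrp K c)
      = univ.filter (fun u : Kˣ => u ^ c = 1) :=
    Finset.filter_congr (fun x _ => by rw [mem_Hgrp])
  rw [heq]
  exact card_units_pow_eq_one hc (c_dvd_card_units hq hcard hdvd)

lemma card_Fgrp (hq : 3 ≤ q) (hcard : Fintype.card K = q ^ 2) :
    Nat.card (Fgrp K q) = q - 1 := by
  rw [Nat.card_eq_fintype_card, Fintype.card_subtype]
  have heq : (univ.filter fun u : Kˣ => u ∈ Fgrp K q)
      = univ.filter (fun u : Kˣ => u ^ (q - 1) = 1) :=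
    Finset.filter_congr (fun x _ => by rw [mem_Fgrp])
  rw [heq]
  exact card_units_pow_eq_one (by omega) (sub_one_dvd_card_units hq hcard)

lemma card_pencil (hq : 3 ≤ q) {c : ℕ} (hcard : Fintype.card K = q ^ 2)
    (hdvd : c ∣ q - 1) (hc : 0 < c) {T : Finset (Kˣ ⧸ Fgrp K q)} (hT : T.card = c) :
    (pencil q c T).card = q := by
  set PT := univ.filter fun x : Kˣ => (QuotientGroup.mk x : Kˣ ⧸ Fgrp K q) ∈ T with hPT
  have step1 : PT.card = c * (q - 1) := by
    have hmap : ∀ x ∈ PT, (QuotientGroup.mk x : Kˣ ⧸ Fgrp K q) ∈ T := by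
      intro x hx
      exact (mem_filter.mp hx).2
    rw [Finset.card_eq_sum_card_fiberwise hmap]
    have hfib : ∀ w ∈ T, (PT.filter fun x : Kˣ =>
        (QuotientGroup.mk x : Kˣ ⧸ Fgrp K q) = w).card = q - 1 := by
      intro w hw
      have heq : (PT.filter fun x : Kˣ => (QuotientGroup.mk x : Kˣ ⧸ Fgrp K q) = w)
          = univ.filter fun x : Kˣ => (QuotientGroup.mk x : Kˣ ⧸ Fgrp K q) = w := by
        ext x
        simp only [hPT, filter_filter, mem_filter, mem_univ, true_and]
        constructor
        · exact fun h => h.2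
        · exact fun h => ⟨h ▸ hw, h⟩
      rw [heq, card_mk_fiber, card_Fgrp hq hcard]
    rw [Finset.sum_congr rfl hfib, Finset.sum_const, hT, smul_eq_mul]
  set I := PT.image (fun x => (QuotientGroup.mk x : Kˣ ⧸ Hgrp K c)) with hI
  have step2 : PT.card = I.card * c := by
    have hmap : ∀ x ∈ PT, (QuotientGroup.mk x : Kˣ ⧸ Hgrp K c) ∈ I := by
      intro x hx
      exact mem_image_of_mem _ hx
    rw [Finset.card_eq_sum_card_fiberwise hmap]
    have hfib : ∀ v ∈ I, (PT.filter fun x : Kˣ =>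
        (QuotientGroup.mk x : Kˣ ⧸ Hgrp K c) = v).card = c := by
      intro v hv
      obtain ⟨x₀, hx₀PT, hx₀⟩ := mem_image.mp hv
      have heq : (PT.filter fun x : Kˣ => (QuotientGroup.mk x : Kˣ ⧸ Hgrp K c) = v)
          = univ.filter fun x : Kˣ => (QuotientGroup.mk x : Kˣ ⧸ Hgrp K c) = v := by
        ext x
        simp only [hPT, filter_filter, mem_filter, mem_univ, true_and]
        refine ⟨fun h => h.2, fun h => ⟨?_, h⟩⟩
        have hxx₀ : (QuotientGroup.mk x₀ : Kˣ ⧸ Hgrp K c) = QuotientGroup.mk x := by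
          rw [hx₀, h]
        have hmemF : x₀⁻¹ * x ∈ Fgrp K q := H_le_F hdvd (QuotientGroup.eq.mp hxx₀)
        have : (QuotientGroup.mk x : Kˣ ⧸ Fgrp K q) = QuotientGroup.mk x₀ :=
          (QuotientGroup.eq.mpr hmemF).symm
        rw [this]
        exact (mem_filter.mp hx₀PT).2
      rw [heq, card_mk_fiber, card_Hgrp hq hcard hdvd hc]
    rw [Finset.sum_congr rfl hfib, Finset.sum_const, smul_eq_mul]
  have hIcard : I.card = q - 1 := by
    have h1 : I.card * c = c * (q - 1) := by rw [← step2, step1]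
    have h2 : c * (q - 1) = (q - 1) * c := by ring
    rw [h2] at h1
    exact Nat.eq_of_mul_eq_mul_right hc h1
  have hnone : (none : Option (Kˣ ⧸ Hgrp K c)) ∉
      (PT.image fun x => some (QuotientGroup.mk x : Kˣ ⧸ Hgrp K c)) := by
    intro h
    obtain ⟨x, _, hx⟩ := mem_image.mp h
    exact Option.some_ne_none _ hx
  have himg : (PT.image fun x => some (QuotientGroup.mk x : Kˣ ⧸ Hgrp K c))
      = I.image some := by
    rw [hI, Finset.image_image]
    rfl
  rw [pencil, card_insert_of_notMem hnone, himg,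
    card_image_of_injective _ (Option.some_injective _), hIcard]
  omega

lemma none_not_mem_edge {c : ℕ} (a : Kˣ) :
    (none : Option (Kˣ ⧸ Hgrp K c)) ∉ edge q c a := by
  intro h
  obtain ⟨x, _, hx⟩ := mem_image.mp h
  exact Option.some_ne_none _ hx

lemma some_mem_pencil {c : ℕ} {T : Finset (Kˣ ⧸ Fgrp K q)} {x : Kˣ}
    (hdvd : c ∣ q - 1)
    (h : some (QuotientGroup.mk x : Kˣ ⧸ Hgrp K c) ∈ pencil q c T) :
    (QuotientGroup.mk x : Kˣ ⧸ Fgrp K q) ∈ T := by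
  rcases mem_insert.mp h with h' | h'
  · exact absurd h' (Option.some_ne_none _)
  · obtain ⟨y, hy, hyx⟩ := mem_image.mp h'
    have hxy : (QuotientGroup.mk y : Kˣ ⧸ Hgrp K c) = QuotientGroup.mk x :=
      Option.some_injective _ hyx
    have hmemF : y⁻¹ * x ∈ Fgrp K q := H_le_F hdvd (QuotientGroup.eq.mp hxy)
    have heq : (QuotientGroup.mk x : Kˣ ⧸ Fgrp K q) = QuotientGroup.mk y :=
      (QuotientGroup.eq.mpr hmemF).symm
    rw [heq]
    exact (mem_filter.mp hy).2

lemma mem_pencil_of_mem {c : ℕ} {T : Finset (Kˣ ⧸ Fgrp K q)} {x : Kˣ}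
    (h : (QuotientGroup.mk x : Kˣ ⧸ Fgrp K q) ∈ T) :
    some (QuotientGroup.mk x : Kˣ ⧸ Hgrp K c) ∈ pencil q c T := by
  apply mem_insert_of_mem
  exact mem_image_of_mem _ (mem_filter.mpr ⟨mem_univ _, h⟩)

lemma edge_inter_pencil (hq : 3 ≤ q) {c : ℕ} (hcard : Fintype.card K = q ^ 2)
    (hdvd : c ∣ q - 1) {T : Finset (Kˣ ⧸ Fgrp K q)} (hT : T.card = c) (a : Kˣ) :
    (edge q c a ∩ pencil q c T).card ≤ c := by
  set LT := univ.filter (fun x : Kˣ => tr q ((a : K) * (x : K)) = 1 ∧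
    (QuotientGroup.mk x : Kˣ ⧸ Fgrp K q) ∈ T) with hLT
  have hsub : edge q c a ∩ pencil q c T ⊆
      LT.image (fun x => some (QuotientGroup.mk x : Kˣ ⧸ Hgrp K c)) := by
    intro v hv
    rw [mem_inter] at hv
    obtain ⟨x, hxline, hxv⟩ := mem_image.mp hv.1
    have hvp : some (QuotientGroup.mk x : Kˣ ⧸ Hgrp K c) ∈ pencil q c T := by
      rw [hxv]; exact hv.2
    have hxT := some_mem_pencil hdvd hvp
    exact mem_image.mpr ⟨x, mem_filter.mpr ⟨mem_univ _, mem_line.mp hxline, hxT⟩, hxv⟩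
  have hLTcard : LT.card ≤ c := by
    rw [← hT]
    apply Finset.card_le_card_of_injOn (fun x => (QuotientGroup.mk x : Kˣ ⧸ Fgrp K q))
    · intro x hx
      exact (mem_filter.mp hx).2.2
    · intro x hx y hy hxy
      simp only [hLT, coe_filter, Set.mem_setOf_eq, mem_univ, true_and] at hx hy
      have hmemF : x⁻¹ * y ∈ Fgrp K q := QuotientGroup.eq.mp hxy
      have hlF : ((x⁻¹ * y : Kˣ) : K) ^ q = ((x⁻¹ * y : Kˣ) : K) := F_fix hq hmemF
      set l := x⁻¹ * y with hldef
      have hyl : y = x * l := by rw [hldef]; group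
      have htr : tr q ((a : K) * (y : K)) = (l : K) * tr q ((a : K) * (x : K)) := by
        rw [hyl, show (a : K) * ((x * l : Kˣ) : K) = (l : K) * ((a : K) * (x : K)) by
          push_cast; ring]
        exact tr_smul hlF _
      rw [hx.1, hy.1, mul_one] at htr
      have hl1 : l = 1 := Units.ext (by rw [Units.val_one, ← htr])
      rw [hyl, hl1, mul_one]
  calc (edge q c a ∩ pencil q c T).card
      ≤ (LT.image (fun x => some (QuotientGroup.mk x : Kˣ ⧸ Hgrp K c))).card :=
        card_le_card hsub
    _ ≤ LT.card := card_image_le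
    _ ≤ c := hLTcard

lemma pencil_inter_pencil {c : ℕ} (hdvd : c ∣ q - 1)
    {T₁ T₂ : Finset (Kˣ ⧸ Fgrp K q)} (hdisj : Disjoint T₁ T₂) :
    (pencil q c T₁ ∩ pencil q c T₂).card ≤ 1 := by
  have hsub : pencil q c T₁ ∩ pencil q c T₂ ⊆ {none} := by
    intro v hv
    rw [mem_inter] at hv
    rcases v with _ | z
    · exact mem_singleton_self _
    · exfalso
      obtain ⟨x, rfl⟩ := QuotientGroup.mk_surjective z
      have h1 := some_mem_pencil hdvd hv.1
      have h2 := some_mem_pencil hdvd hv.2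
      exact (Finset.disjoint_left.mp hdisj) h1 h2
  calc (pencil q c T₁ ∩ pencil q c T₂).card ≤ ({none} : Finset (Option (Kˣ ⧸ Hgrp K c))).card :=
      card_le_card hsub
    _ = 1 := card_singleton _

theorem main {K : Type} [Field K] [Fintype K] (q c : ℕ)
    (hcard : Fintype.card K = q ^ 2)
    (hfrob : ∀ x y : K, (x + y) ^ q = x ^ q + y ^ q)
    (hc : 0 < c) (hlt : c < q - 1) (hdvd : c ∣ q - 1) :
    ∃ (V : Type) (_ : Fintype V) (_ : DecidableEq V) (E : Finset (Finset V)),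
      Fintype.card V = (q ^ 2 - 1) / c + 1 ∧
      (q ^ 2 - 1) / c + 2 ≤ E.card ∧
      (∀ e ∈ E, e.card = q) ∧
      (∀ e ∈ E, ∀ e' ∈ E, e ≠ e' → (e ∩ e').card ≤ c) := by
  have hq : 3 ≤ q := by omega
  haveI : Fintype (Kˣ ⧸ Hgrp K c) := Fintype.ofFinite _
  haveI : Fintype (Kˣ ⧸ Fgrp K q) := Fintype.ofFinite _
  have hcardU : Nat.card Kˣ = q ^ 2 - 1 := by
    rw [Nat.card_eq_fintype_card, Fintype.card_units, hcard]
  have hV0 : Fintype.card (Kˣ ⧸ Hgrp K c) = (q ^ 2 - 1) / c := by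
    have h1 := Subgroup.card_eq_card_quotient_mul_card_subgroup (Hgrp K c)
    rw [hcardU, card_Hgrp hq hcard hdvd hc] at h1
    rw [← Nat.card_eq_fintype_card]
    exact (Nat.div_eq_of_eq_mul_left hc h1).symm
  have hfact : (q + 1) * (q - 1) = q ^ 2 - 1 := by
    have h2 : 1 ≤ q ^ 2 := Nat.one_le_pow _ _ (by omega)
    zify [show 1 ≤ q by omega, h2]; ring
  have hW : Fintype.card (Kˣ ⧸ Fgrp K q) = q + 1 := by
    have h1 := Subgroup.card_eq_card_quotient_mul_card_subgroup (Fgrp K q)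
    rw [hcardU, card_Fgrp hq hcard, ← hfact] at h1
    rw [← Nat.card_eq_fintype_card]
    exact Nat.eq_of_mul_eq_mul_right (show 0 < q - 1 by omega) h1.symm
  have h2c : 2 * c ≤ q - 1 := by
    obtain ⟨k, hk⟩ := hdvd
    have hk2 : 2 ≤ k := by
      rcases k with _ | _ | k
      · omega
      · omega
      · omega
    calc 2 * c ≤ k * c := Nat.mul_le_mul_right c hk2
      _ = c * k := by ring
      _ = q - 1 := hk.symm
  obtain ⟨T, _, hTcard⟩ := Finset.exists_subset_card_eq
    (show 2 * c ≤ (univ : Finset (Kˣ ⧸ Fgrp K q)).card by rw [card_univ, hW]; omega)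
  obtain ⟨T₁, hT₁sub, hT₁⟩ := Finset.exists_subset_card_eq (show c ≤ T.card by omega)
  set T₂ := T \ T₁ with hT₂def
  have hT₂ : T₂.card = c := by rw [hT₂def, card_sdiff_of_subset hT₁sub, hTcard, hT₁]; omega
  have hdisj : Disjoint T₁ T₂ := Finset.disjoint_sdiff
  set Eold := (univ : Finset Kˣ).image (edge q c) with hEold
  have hedge_eq_imp : ∀ a b : Kˣ, edge q c a = edge q c b →
      (QuotientGroup.mk a : Kˣ ⧸ Hgrp K c) = QuotientGroup.mk b := by
    intro a b hab
    by_contra hne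
    have h1 := edge_inter hq hcard hfrob hdvd hc hne
    rw [hab, inter_self, card_edge hq hcard hfrob hdvd] at h1
    omega
  have hEoldcard : (q ^ 2 - 1) / c ≤ Eold.card := by
    rw [← hV0, ← card_univ]
    apply Finset.card_le_card_of_injOn (fun v => edge q c (Quotient.out v))
    · intro v _
      exact mem_image_of_mem _ (mem_univ _)
    · intro v _ w _ hvw
      have h2 := hedge_eq_imp _ _ hvw
      rwa [QuotientGroup.out_eq', QuotientGroup.out_eq'] at h2

  have hpne : ∀ (T' : Finset (Kˣ ⧸ Fgrp K q)) (a : Kˣ), pencil q c T' ≠ edge q c a := by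
    intro T' a h
    apply none_not_mem_edge a
    rw [← h]
    exact mem_insert_self _ _
  have hpnotold : ∀ T' : Finset (Kˣ ⧸ Fgrp K q), pencil q c T' ∉ Eold := by
    intro T' h
    obtain ⟨a, _, ha⟩ := mem_image.mp h
    exact hpne T' a ha.symm
  have hp12 : pencil q c T₁ ≠ pencil q c T₂ := by
    intro h
    have hT₁ne : T₁.Nonempty := card_pos.mp (by omega)
    obtain ⟨w, hw⟩ := hT₁ne
    obtain ⟨x₀, rfl⟩ := QuotientGroup.mk_surjective w
    have h1 : some (QuotientGroup.mk x₀ : Kˣ ⧸ Hgrp K c) ∈ pencil q c T₁ :=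
      mem_pencil_of_mem hw
    rw [h] at h1
    exact (Finset.disjoint_left.mp hdisj) hw (some_mem_pencil hdvd h1)
  set E := insert (pencil q c T₁) (insert (pencil q c T₂) Eold) with hE
  have hnotmem1 : pencil q c T₁ ∉ insert (pencil q c T₂) Eold := by
    intro h
    rcases mem_insert.mp h with h' | h'
    · exact hp12 h'
    · exact hpnotold T₁ h'
  have hEcard : E.card = Eold.card + 2 := by
    rw [hE, card_insert_of_notMem hnotmem1, card_insert_of_notMem (hpnotold T₂)]
  refine ⟨Option (Kˣ ⧸ Hgrp K c), inferInstance, inferInstance, E, ?_, ?_, ?_, ?_⟩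
  · rw [Fintype.card_option, hV0]
  · omega
  · intro e he
    rcases mem_insert.mp he with rfl | he
    · exact card_pencil hq hcard hdvd hc hT₁
    rcases mem_insert.mp he with rfl | he
    · exact card_pencil hq hcard hdvd hc hT₂
    obtain ⟨a, _, rfl⟩ := mem_image.mp he
    exact card_edge hq hcard hfrob hdvd a
  · intro e he e' he' hne
    have hcases : ∀ f ∈ E, f = pencil q c T₁ ∨ f = pencil q c T₂ ∨ ∃ a : Kˣ, f = edge q c a := by
      intro f hf
      rcases mem_insert.mp hf with rfl | hf
      · exact Or.inl rfl
      rcases mem_insert.mp hf with rfl | hf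
      · exact Or.inr (Or.inl rfl)
      obtain ⟨a, _, rfl⟩ := mem_image.mp hf
      exact Or.inr (Or.inr ⟨a, rfl⟩)
    rcases hcases e he with rfl | rfl | ⟨a, rfl⟩ <;>
      rcases hcases e' he' with rfl | rfl | ⟨b, rfl⟩
    · exact absurd rfl hne
    · exact le_trans (pencil_inter_pencil hdvd hdisj) hc
    · rw [inter_comm]
      exact edge_inter_pencil hq hcard hdvd hT₁ b
    · rw [inter_comm]
      exact le_trans (pencil_inter_pencil hdvd hdisj) hc
    · exact absurd rfl hne
    · rw [inter_comm]
      exact edge_inter_pencil hq hcard hdvd hT₂ b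
    · exact edge_inter_pencil hq hcard hdvd hT₁ a
    · exact edge_inter_pencil hq hcard hdvd hT₂ a
    · have hab : (QuotientGroup.mk a : Kˣ ⧸ Hgrp K c) ≠ QuotientGroup.mk b := by
        intro h
        exact hne (edge_congr h)
      exact edge_inter hq hcard hfrob hdvd hc hab

end
end AugHyp

/-- Augmented hypergraph construction: if `q` is a prime power and `c` is a
positive integer with `c < q − 1` and `c ∣ q − 1`, then there exists a `q`-uniform
hypergraph with `(q² − 1)/c + 1` vertices and at least `(q² − 1)/c + 2` edges such
that every two distinct edges intersect in at most `c` vertices. -/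
theorem augmented_hypergraph (q c : ℕ)
    (hq : IsPrimePow q) (hc : 0 < c) (hlt : c < q - 1) (hdvd : c ∣ q - 1) :
    ∃ (V : Type) (_ : Fintype V) (_ : DecidableEq V) (E : Finset (Finset V)),
      Fintype.card V = (q ^ 2 - 1) / c + 1 ∧
      (q ^ 2 - 1) / c + 2 ≤ E.card ∧
      (∀ e ∈ E, e.card = q) ∧
      (∀ e ∈ E, ∀ e' ∈ E, e ≠ e' → (e ∩ e').card ≤ c) := by
  obtain ⟨p, e, hp, he, rfl⟩ := hq
  haveI : Fact (Nat.Prime p) := ⟨hp.nat_prime⟩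
  haveI : Fintype (GaloisField p (2 * e)) := Fintype.ofFinite _
  have hcard : Fintype.card (GaloisField p (2 * e)) = (p ^ e) ^ 2 := by
    rw [← Nat.card_eq_fintype_card, GaloisField.card p (2 * e) (by omega), ← pow_mul]
    ring_nf
  have hfrob : ∀ x y : GaloisField p (2 * e),
      (x + y) ^ (p ^ e) = x ^ (p ^ e) + y ^ (p ^ e) := fun x y =>
    add_pow_char_pow x y p e
  exact AugHyp.main (p ^ e) c hcard hfrob hc hlt hdvd
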